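/- Let B be a deterministic k-way branching program of depth at most 2^h solving BT^h_2(k), with h ≥ 1 and k ≥ 2. Then every input I all of whose internal node functions f_i^I are quasigroups is thrifty, i.e., every variable queried along the computation path of I is a thrifty variable of I. -/

import Mathlib

/-! Framework: the tree evaluation problem and deterministic k-way branching programs.

The balanced binary tree of height `h` has nodes numbered heap-style `1, …, 2^h - 1`:
the root is node `1` and the children of node `i` are `2i` and `2i+1`.
Elements of `[k] = {1,…,k}` are represented by `Fin k` (the element `1 ∈ [k]`
corresponds to `(0 : Fin k)`). -/

/-- Node `i` is a leaf of the height-`h` balanced binary tree. -/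
def IsLeafNode (h i : ℕ) : Prop := 2 ^ (h - 1) ≤ i ∧ i < 2 ^ h

/-- Node `i` is an internal node of the height-`h` balanced binary tree. -/
def IsInternalNode (h i : ℕ) : Prop := 1 ≤ i ∧ i < 2 ^ (h - 1)

/-- An input to the height-`h` tree evaluation problem over `[k]`: a binary function on `[k]`
for each internal node and a value in `[k]` for each leaf (values at irrelevant indices
are ignored). -/
structure TEInput (h k : ℕ) where
  f : ℕ → Fin k → Fin k → Fin k
  leaf : ℕ → Fin k

/-- Auxiliary recursion (on fuel) computing node values. -/
def TEInput.valAux {h k : ℕ} (I : TEInput h k) : ℕ → ℕ → Fin k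
  | 0, i => I.leaf i
  | m + 1, i =>
      if 2 ^ (h - 1) ≤ i then I.leaf i
      else I.f i (I.valAux m (2 * i)) (I.valAux m (2 * i + 1))

/-- The value `v_i^I` of node `i`: the leaf value if `i` is a leaf, and
`f_i^I (v_{2i}^I, v_{2i+1}^I)` if `i` is an internal node. -/
def TEInput.val {h k : ℕ} (I : TEInput h k) (i : ℕ) : Fin k := I.valAux h i

/-- The input variables of the tree evaluation problem: one variable `f_i(a,b)` for each
internal node `i` and `a b ∈ [k]`, and one variable `l_i` for each leaf `i`. -/
inductive TEVar (h k : ℕ) where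
  | internal (i : ℕ) (hi : IsInternalNode h i) (a b : Fin k) : TEVar h k
  | leaf (i : ℕ) (hi : IsLeafNode h i) : TEVar h k

/-- The value of a variable under an input. -/
def TEInput.evalVar {h k : ℕ} (I : TEInput h k) : TEVar h k → Fin k
  | .internal i _ a b => I.f i a b
  | .leaf i _ => I.leaf i

/-- The node a variable belongs to. -/
def TEVar.node {h k : ℕ} : TEVar h k → ℕ
  | .internal i _ _ _ => i
  | .leaf i _ => i

/-- `X` is the thrifty `i` variable of input `I`: it is `f_i(v_{2i}^I, v_{2i+1}^I)`
if `i` is an internal node, and `l_i` if `i` is a leaf. -/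
def IsThriftyVarOf {h k : ℕ} (I : TEInput h k) (i : ℕ) : TEVar h k → Prop
  | .internal j _ a b => j = i ∧ a = I.val (2 * j) ∧ b = I.val (2 * j + 1)
  | .leaf j _ => j = i

/-- A deterministic `k`-way branching program with variables indexed by `V` and
output set `R`: a set of states (of cardinality `size`), a start state, each state
labeled either with a variable to query (non-output states, with `k` out-edges
labeled `1,…,k`) or with an output value (output sink states). -/
structure DetBP (V : Type) (k : ℕ) (R : Type) where
  size : ℕ
  start : Fin size
  label : Fin size → V ⊕ R
  next : Fin size → Fin k → Fin size

namespace DetBP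

variable {V : Type} {k : ℕ} {R : Type}

/-- One step of computation on input `x`: from a state querying variable `v`, follow
the out-edge labeled `x v`; output states are sinks. -/
def step (B : DetBP V k R) (x : V → Fin k) (s : Fin B.size) : Fin B.size :=
  match B.label s with
  | .inl v => B.next s (x v)
  | .inr _ => s

/-- The state of the computation path of `x` at time `t`. -/
def run (B : DetBP V k R) (x : V → Fin k) (t : ℕ) : Fin B.size :=
  (B.step x)^[t] B.start

/-- The depth of `B` is at most `D`: on every input, the computation path reaches an
output state within its first `D` states. -/
def DepthLE (B : DetBP V k R) (D : ℕ) : Prop :=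
  ∀ x : V → Fin k, ∃ t < D, (B.label (B.run x t)).isRight = true

/-- `B` solves the function tree evaluation problem `FT^h_2(k)`: on every input `I`, the
computation path ends in the output state labeled with the root value `v_1^I`. -/
def SolvesFT {h : ℕ} (B : DetBP (TEVar h k) k (Fin k)) : Prop :=
  ∀ I : TEInput h k, ∃ t, B.label (B.run I.evalVar t) = Sum.inr (I.val 1)

/-- `B` solves the decision tree evaluation problem `BT^h_2(k)`: on every input `I`, the
computation path ends in the output state labeled with whether `v_1^I = 1`
(the element `1 ∈ [k]` being `(0 : Fin k)`). -/
def SolvesBT {h : ℕ} (B : DetBP (TEVar h k) k Bool) : Prop :=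
  ∀ I : TEInput h k, ∃ t, B.label (B.run I.evalVar t) = Sum.inr (decide ((I.val 1 : Fin k).val = 0))

/-- `B` is thrifty: on every input `I`, every query `f_i(a,b)` made along the computation
path of `I` satisfies `a = v_{2i}^I` and `b = v_{2i+1}^I`. -/
def Thrifty {h : ℕ} (B : DetBP (TEVar h k) k R) : Prop :=
  ∀ (I : TEInput h k) (t i : ℕ) (hi : IsInternalNode h i) (a b : Fin k),
    B.label (B.run I.evalVar t) = Sum.inl (TEVar.internal i hi a b) →
    a = I.val (2 * i) ∧ b = I.val (2 * i + 1)

end DetBP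

/-! ### Auxiliary lemmas -/

namespace DetBP

variable {V : Type} {k : ℕ} {R : Type}

lemma run_succ (B : DetBP V k R) (x : V → Fin k) (t : ℕ) :
    B.run x (t + 1) = B.step x (B.run x t) :=
  Function.iterate_succ_apply' _ _ _

lemma run_congr (B : DetBP V k R) {x y : V → Fin k}
    (hxy : ∀ t v, B.label (B.run x t) = .inl v → x v = y v) :
    ∀ t, B.run x t = B.run y t := by
  intro t
  induction t with
  | zero => rfl
  | succ t ih =>
    rw [run_succ, run_succ, ← ih]
    unfold step
    rcases hl : B.label (B.run x t) with v | r
    · show B.next (B.run x t) (x v) = B.next (B.run x t) (y v)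
      rw [hxy t v hl]
    · rfl

lemma run_stab (B : DetBP V k R) {x : V → Fin k} {t : ℕ} {r : R}
    (hr : B.label (B.run x t) = .inr r) (s : ℕ) : B.run x (t + s) = B.run x t := by
  induction s with
  | zero => rfl
  | succ s ih =>
    rw [show t + (s + 1) = (t + s) + 1 by omega, run_succ, ih]
    unfold step
    rw [hr]

lemma out_unique (B : DetBP V k R) {x : V → Fin k} {t s : ℕ} {r r' : R}
    (hr : B.label (B.run x t) = .inr r) (hr' : B.label (B.run x s) = .inr r') :
    r = r' := by
  rcases le_total t s with hts | hts
  · have h1 := B.run_stab hr (s - t)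
    rw [show t + (s - t) = s by omega] at h1
    rw [h1, hr] at hr'
    exact (Sum.inr.inj hr')
  · have h1 := B.run_stab hr' (t - s)
    rw [show s + (t - s) = t by omega] at h1
    rw [h1, hr'] at hr
    exact (Sum.inr.inj hr).symm

lemma inl_lt (B : DetBP V k R) {x : V → Fin k} {t0 t : ℕ} {r : R} {v : V}
    (hr : B.label (B.run x t0) = .inr r) (hv : B.label (B.run x t) = .inl v) :
    t < t0 := by
  by_contra hc
  push_neg at hc
  have h1 := B.run_stab hr (t - t0)
  rw [show t0 + (t - t0) = t by omega] at h1
  rw [h1, hr] at hv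
  exact nomatch hv

end DetBP

namespace TEInput

variable {h k : ℕ}

lemma valAux_succ (I : TEInput h k) (m i : ℕ) :
    I.valAux (m + 1) i =
      if 2 ^ (h - 1) ≤ i then I.leaf i
      else I.f i (I.valAux m (2 * i)) (I.valAux m (2 * i + 1)) := rfl

lemma valAux_congr (I J : TEInput h k) :
    ∀ (m i : ℕ),
      (∀ j, (∃ e, j / 2 ^ e = i) → I.f j = J.f j ∧ I.leaf j = J.leaf j) →
      I.valAux m i = J.valAux m i := by
  intro m
  induction m with
  | zero =>
    intro i hag
    exact (hag i ⟨0, by simp⟩).2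
  | succ m ih =>
    intro i hag
    have hself := hag i ⟨0, by simp⟩
    rw [valAux_succ, valAux_succ]
    split
    · exact hself.2
    · have hA : I.valAux m (2 * i) = J.valAux m (2 * i) := by
        apply ih
        intro j hj
        obtain ⟨e, he⟩ := hj
        refine hag j ⟨e + 1, ?_⟩
        rw [pow_succ, ← Nat.div_div_eq_div_mul, he]
        omega
      have hB : I.valAux m (2 * i + 1) = J.valAux m (2 * i + 1) := by
        apply ih
        intro j hj
        obtain ⟨e, he⟩ := hj
        refine hag j ⟨e + 1, ?_⟩
        rw [pow_succ, ← Nat.div_div_eq_div_mul, he]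
        omega
      rw [hself.1, hA, hB]

lemma valAux_fuel (I : TEInput h k) :
    ∀ (m i : ℕ), 2 ^ (h - 1) ≤ i * 2 ^ m → I.valAux m i = I.valAux (m + 1) i := by
  intro m
  induction m with
  | zero =>
    intro i hi
    simp only [pow_zero, mul_one] at hi
    rw [valAux_succ, if_pos hi]
    rfl
  | succ m ih =>
    intro i hi
    by_cases hleaf : 2 ^ (h - 1) ≤ i
    · rw [valAux_succ, valAux_succ, if_pos hleaf, if_pos hleaf]
    · rw [valAux_succ, valAux_succ, if_neg hleaf, if_neg hleaf,
        ih (2 * i) (by rw [pow_succ] at hi; nlinarith),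
        ih (2 * i + 1) (by rw [pow_succ] at hi; nlinarith [pow_pos (show (0:ℕ) < 2 by norm_num) m])]

lemma val_eq (hh : 1 ≤ h) (I : TEInput h k) (i : ℕ) :
    I.val i = I.valAux (h - 1 + 1) i := by
  have heq : h - 1 + 1 = h := by omega
  rw [val, heq]

lemma val_leaf (hh : 1 ≤ h) (I : TEInput h k) {i : ℕ} (hi : 2 ^ (h - 1) ≤ i) :
    I.val i = I.leaf i := by
  rw [val_eq hh, valAux_succ, if_pos hi]

lemma val_internal (hh : 1 ≤ h) (I : TEInput h k) {i : ℕ} (hi1 : 1 ≤ i)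
    (hi2 : i < 2 ^ (h - 1)) :
    I.val i = I.f i (I.val (2 * i)) (I.val (2 * i + 1)) := by
  rw [val_eq hh, valAux_succ, if_neg (not_le.mpr hi2),
    I.valAux_fuel (h - 1) (2 * i) (Nat.le_mul_of_pos_left _ (by omega)),
    I.valAux_fuel (h - 1) (2 * i + 1) (Nat.le_mul_of_pos_left _ (by omega)),
    ← val_eq hh, ← val_eq hh]

lemma val_congr (I J : TEInput h k) (i : ℕ)
    (hag : ∀ j, (∃ e, j / 2 ^ e = i) → I.f j = J.f j ∧ I.leaf j = J.leaf j) :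
    I.val i = J.val i :=
  valAux_congr I J h i hag

end TEInput

/-- Upward propagation: if two inputs agree with `I` everywhere off node `n`, whose
internal functions are quasigroups, and their values at `n` differ, then their values
at every ancestor of `n` differ. -/
lemma upward {h k : ℕ} (hh : 1 ≤ h) (I : TEInput h k)
    (hquasi : ∀ i : ℕ, IsInternalNode h i → ∀ a : Fin k,
      Function.Bijective (I.f i a) ∧ Function.Bijective (fun x => I.f i x a))
    (n : ℕ) (hn1 : 1 ≤ n) (hnh : n < 2 ^ h) :
    ∀ e, 2 ^ e ≤ n → ∀ I₁ I₂ : TEInput h k,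
      (∀ j, j ≠ n → I₁.f j = I.f j ∧ I₁.leaf j = I.leaf j) →
      (∀ j, j ≠ n → I₂.f j = I.f j ∧ I₂.leaf j = I.leaf j) →
      I₁.val n ≠ I₂.val n → I₁.val (n / 2 ^ e) ≠ I₂.val (n / 2 ^ e) := by
  intro e
  induction e with
  | zero => intro _ I₁ I₂ _ _ hne; simpa using hne
  | succ e ih =>
    intro he I₁ I₂ h1 h2 hne
    have he' : 2 ^ e ≤ n := le_trans (Nat.pow_le_pow_right (by norm_num) (Nat.le_succ e)) he
    have ha := ih he' I₁ I₂ h1 h2 hne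
    set a := n / 2 ^ e with hadef
    set p := n / 2 ^ (e + 1) with hpdef
    have hap : a / 2 = p := by
      rw [hadef, hpdef, Nat.div_div_eq_div_mul, ← pow_succ]
    have ha2 : 2 ≤ a := by
      rw [hadef]
      rw [Nat.le_div_iff_mul_le (pow_pos (show (0:ℕ) < 2 by norm_num) e)]
      calc 2 * 2 ^ e = 2 ^ (e + 1) := by rw [pow_succ]; ring
        _ ≤ n := he
    have hp1 : 1 ≤ p := by omega
    have han : a ≤ n := Nat.div_le_self _ _
    have hpn : p ≠ n := by omega
    have hp2 : p < 2 ^ (h - 1) := by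
      by_contra hc
      push_neg at hc
      have h1' : p * 2 ^ (e + 1) ≤ n := Nat.div_mul_le_self _ _
      have h2' : (2 : ℕ) ≤ 2 ^ (e + 1) := by
        calc (2:ℕ) = 2 ^ 1 := (pow_one 2).symm
          _ ≤ 2 ^ (e + 1) := Nat.pow_le_pow_right (by norm_num) (by omega)
      have h3' : 2 ^ (h - 1) * 2 = 2 ^ h := by
        rw [← pow_succ]
        congr 1
        omega
      have : 2 ^ h ≤ n := by
        calc 2 ^ h = 2 ^ (h - 1) * 2 := h3'.symm
          _ ≤ p * 2 := Nat.mul_le_mul_right 2 hc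
          _ ≤ p * 2 ^ (e + 1) := Nat.mul_le_mul_left p h2'
          _ ≤ n := h1'
      omega
    have hfp1 : I₁.f p = I.f p := (h1 p hpn).1
    have hfp2 : I₂.f p = I.f p := (h2 p hpn).1
    have e1 : I₁.val p = I.f p (I₁.val (2 * p)) (I₁.val (2 * p + 1)) := by
      rw [TEInput.val_internal hh I₁ hp1 hp2, hfp1]
    have e2 : I₂.val p = I.f p (I₂.val (2 * p)) (I₂.val (2 * p + 1)) := by
      rw [TEInput.val_internal hh I₂ hp1 hp2, hfp2]
    -- an ancestor-uniqueness fact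
    have asym : ∀ e₁ e₂ b₁ b₂ : ℕ, e₁ ≤ e₂ → n / 2 ^ e₁ = b₁ → n / 2 ^ e₂ = b₂ →
        b₁ / 2 = b₂ / 2 → 1 ≤ b₁ / 2 → b₁ = b₂ := by
      intro e₁ e₂ b₁ b₂ hle hb1 hb2 hhalf hpos
      have hkey : b₂ = b₁ / 2 ^ (e₂ - e₁) := by
        rw [← hb1, Nat.div_div_eq_div_mul, ← pow_add, ← hb2]
        congr 2
        omega
      by_cases hd : e₂ - e₁ = 0
      · rw [hd, pow_zero, Nat.div_one] at hkey
        omega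
      · have h2le : (2:ℕ) ≤ 2 ^ (e₂ - e₁) := by
          calc (2:ℕ) = 2 ^ 1 := (pow_one 2).symm
            _ ≤ 2 ^ (e₂ - e₁) := Nat.pow_le_pow_right (by norm_num) (by omega)
        have hble : b₁ / 2 ^ (e₂ - e₁) ≤ b₁ / 2 :=
          Nat.div_le_div_left h2le (by norm_num)
        have hb2le : b₂ ≤ b₁ / 2 := by rw [hkey]; exact hble
        omega
    have anc : ∀ e₁ e₂ b₁ b₂ : ℕ, n / 2 ^ e₁ = b₁ → n / 2 ^ e₂ = b₂ →
        b₁ / 2 = b₂ / 2 → 1 ≤ b₁ / 2 → b₁ = b₂ := by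
      intro e₁ e₂ b₁ b₂ hb1 hb2 hhalf hpos
      rcases le_total e₁ e₂ with hle | hle
      · exact asym e₁ e₂ b₁ b₂ hle hb1 hb2 hhalf hpos
      · exact (asym e₂ e₁ b₂ b₁ hle hb2 hb1 hhalf.symm (by omega)).symm
    have haeq : a = 2 * p ∨ a = 2 * p + 1 := by omega
    rcases haeq with haeq | haeq
    · -- sibling is 2p+1
      have hsib : I₁.val (2 * p + 1) = I₂.val (2 * p + 1) := by
        apply TEInput.val_congr
        intro j hj
        obtain ⟨e', he'j⟩ := hj
        have hjn : j ≠ n := by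
          rintro rfl
          have := anc e e' a (2 * p + 1) rfl he'j (by omega) (by omega)
          omega
        exact ⟨(h1 j hjn).1.trans (h2 j hjn).1.symm,
          (h1 j hjn).2.trans (h2 j hjn).2.symm⟩
      rw [e1, e2, ← hsib]
      intro hEq
      apply ha
      rw [haeq]
      exact (hquasi p ⟨hp1, hp2⟩ (I₁.val (2 * p + 1))).2.injective hEq
    · -- sibling is 2p
      have hsib : I₁.val (2 * p) = I₂.val (2 * p) := by
        apply TEInput.val_congr
        intro j hj
        obtain ⟨e', he'j⟩ := hj
        have hjn : j ≠ n := by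
          rintro rfl
          have := anc e e' a (2 * p) rfl he'j (by omega) (by omega)
          omega
        exact ⟨(h1 j hjn).1.trans (h2 j hjn).1.symm,
          (h1 j hjn).2.trans (h2 j hjn).2.symm⟩
      rw [e1, e2, ← hsib]
      intro hEq
      apply ha
      rw [haeq]
      exact (hquasi p ⟨hp1, hp2⟩ (I₁.val (2 * p))).1.injective hEq

/-- If `B` is a deterministic `k`-way branching program of depth at most `2^h`
solving `BT^h_2(k)` (`h ≥ 1`, `k ≥ 2`), then every input `I` all of whose internal node
functions are quasigroups is thrifty: every variable queried along the computation path
of `I` is a thrifty variable of `I`. -/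
theorem stmt_4 (h k : ℕ) (hh : 1 ≤ h) (hk : 2 ≤ k) (B : DetBP (TEVar h k) k Bool)
    (hB : B.SolvesBT) (hdepth : B.DepthLE (2 ^ h)) (I : TEInput h k)
    (hquasi : ∀ i : ℕ, IsInternalNode h i → ∀ a : Fin k,
      Function.Bijective (I.f i a) ∧ Function.Bijective (fun x => I.f i x a)) :
    ∀ (t : ℕ) (X : TEVar h k),
      B.label (B.run I.evalVar t) = Sum.inl X → IsThriftyVarOf I X.node X := by
  haveI : NeZero k := ⟨by omega⟩
  -- Step 1: every node's thrifty variable is queried.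
  have key : ∀ n ∈ Finset.Ico 1 (2 ^ h), ∃ t X,
      B.label (B.run I.evalVar t) = Sum.inl X ∧ TEVar.node X = n ∧
      IsThriftyVarOf I n X := by
    intro n hn
    rw [Finset.mem_Ico] at hn
    by_contra hcon
    push_neg at hcon
    -- facts about n / 2 ^ log
    have hn0 : n ≠ 0 := by omega
    have hlogle : 2 ^ Nat.log 2 n ≤ n := Nat.pow_log_le_self 2 hn0
    have hdiv1 : n / 2 ^ Nat.log 2 n = 1 := by
      have h2 := Nat.lt_pow_succ_log_self (show 1 < 2 by norm_num) n
      apply Nat.div_eq_of_lt_le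
      · simpa using hlogle
      · have h3 : (1 + 1) * 2 ^ Nat.log 2 n = 2 ^ (Nat.log 2 n + 1) := by
          rw [pow_succ]; ring
        rw [h3]; exact h2
    by_cases hleafn : 2 ^ (h - 1) ≤ n
    · -- n is a leaf
      have hnleaf : IsLeafNode h n := ⟨hleafn, hn.2⟩
      set Xn : TEVar h k := TEVar.leaf n hnleaf with hXndef
      have hnq : ∀ t, B.label (B.run I.evalVar t) ≠ Sum.inl Xn := by
        intro t hq
        exact hcon t Xn hq rfl rfl
      set J : Fin k → TEInput h k := fun c => ⟨I.f, Function.update I.leaf n c⟩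
        with hJdef
      have hagree : ∀ c, ∀ j, j ≠ n → (J c).f j = I.f j ∧ (J c).leaf j = I.leaf j :=
        fun c j hj => ⟨rfl, Function.update_of_ne hj _ _⟩
      have hvaln : ∀ c, (J c).val n = c := by
        intro c
        rw [TEInput.val_leaf hh _ hleafn]
        simp [hJdef]
      have hginj : Function.Injective (fun c => (J c).val 1) := by
        intro c₁ c₂ hcc
        by_contra hne
        have hup := upward hh I hquasi n hn.1 hn.2 (Nat.log 2 n) hlogle
          (J c₁) (J c₂) (hagree c₁) (hagree c₂)
          (by rw [hvaln, hvaln]; exact hne)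
        rw [hdiv1] at hup
        exact hup hcc
      have hc : ∃ c, decide (((J c).val 1 : Fin k).val = 0) ≠
          decide ((I.val 1 : Fin k).val = 0) := by
        by_cases hroot : (I.val 1 : Fin k).val = 0
        · have h01 : (⟨0, by omega⟩ : Fin k) ≠ (⟨1, by omega⟩ : Fin k) := by
            simp [Fin.ext_iff]
          have hgne := hginj.ne h01
          by_cases hz : ((J ⟨0, by omega⟩).val 1 : Fin k).val = 0
          · refine ⟨⟨1, by omega⟩, ?_⟩
            have : ((J ⟨1, by omega⟩).val 1 : Fin k).val ≠ 0 := by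
              intro hz'
              apply hgne
              show (J ⟨0, by omega⟩).val 1 = (J ⟨1, by omega⟩).val 1
              exact Fin.ext (by omega)
            simp [this, hroot]
          · exact ⟨⟨0, by omega⟩, by simp [hroot]; simpa using hz⟩
        · obtain ⟨c, hc0⟩ := Finite.injective_iff_surjective.mp hginj 0
          refine ⟨c, ?_⟩
          simp only at hc0
          simp [hc0, hroot]
      obtain ⟨c, hcne⟩ := hc
      have hvar : ∀ Y : TEVar h k, Y ≠ Xn → I.evalVar Y = (J c).evalVar Y := by
        intro Y hY
        cases Y with
        | internal j hj a b => rfl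
        | leaf j hj =>
          have hjn : j ≠ n := by
            rintro rfl
            exact hY rfl
          simp [TEInput.evalVar, hJdef, Function.update_of_ne hjn]
      have hruns : ∀ t, B.run I.evalVar t = B.run (J c).evalVar t := by
        apply B.run_congr
        intro t v hl
        have hvX : v ≠ Xn := fun hvX => hnq t (hvX ▸ hl)
        exact hvar v hvX
      obtain ⟨tI, hI⟩ := hB I
      obtain ⟨tJ, hJc⟩ := hB (J c)
      rw [← hruns tJ] at hJc
      exact hcne (B.out_unique hJc hI)
    · -- n is internal
      push_neg at hleafn
      have hnint : IsInternalNode h n := ⟨hn.1, hleafn⟩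
      set Xn : TEVar h k :=
        TEVar.internal n hnint (I.val (2 * n)) (I.val (2 * n + 1)) with hXndef
      have hnq : ∀ t, B.label (B.run I.evalVar t) ≠ Sum.inl Xn := by
        intro t hq
        exact hcon t Xn hq rfl ⟨rfl, rfl, rfl⟩
      set J : Fin k → TEInput h k := fun c =>
        ⟨Function.update I.f n
          (fun a b => if a = I.val (2 * n) ∧ b = I.val (2 * n + 1) then c
            else I.f n a b), I.leaf⟩ with hJdef
      have hagree : ∀ c, ∀ j, j ≠ n → (J c).f j = I.f j ∧ (J c).leaf j = I.leaf j :=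
        fun c j hj => ⟨Function.update_of_ne hj _ _, rfl⟩
      have hchild : ∀ c, (J c).val (2 * n) = I.val (2 * n) ∧
          (J c).val (2 * n + 1) = I.val (2 * n + 1) := by
        intro c
        constructor <;>
        · apply TEInput.val_congr
          intro j hj
          obtain ⟨e, he⟩ := hj
          have hjn : j ≠ n := by
            rintro rfl
            have hle := Nat.div_le_self j (2 ^ e)
            rw [he] at hle
            omega
          exact hagree c j hjn
      have hvaln : ∀ c, (J c).val n = c := by
        intro c
        rw [TEInput.val_internal hh _ hn.1 hleafn, (hchild c).1, (hchild c).2]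
        simp [hJdef]
      have hginj : Function.Injective (fun c => (J c).val 1) := by
        intro c₁ c₂ hcc
        by_contra hne
        have hup := upward hh I hquasi n hn.1 hn.2 (Nat.log 2 n) hlogle
          (J c₁) (J c₂) (hagree c₁) (hagree c₂)
          (by rw [hvaln, hvaln]; exact hne)
        rw [hdiv1] at hup
        exact hup hcc
      have hc : ∃ c, decide (((J c).val 1 : Fin k).val = 0) ≠
          decide ((I.val 1 : Fin k).val = 0) := by
        by_cases hroot : (I.val 1 : Fin k).val = 0
        · have h01 : (⟨0, by omega⟩ : Fin k) ≠ (⟨1, by omega⟩ : Fin k) := by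
            simp [Fin.ext_iff]
          have hgne := hginj.ne h01
          by_cases hz : ((J ⟨0, by omega⟩).val 1 : Fin k).val = 0
          · refine ⟨⟨1, by omega⟩, ?_⟩
            have : ((J ⟨1, by omega⟩).val 1 : Fin k).val ≠ 0 := by
              intro hz'
              apply hgne
              show (J ⟨0, by omega⟩).val 1 = (J ⟨1, by omega⟩).val 1
              exact Fin.ext (by omega)
            simp [this, hroot]
          · exact ⟨⟨0, by omega⟩, by simp [hroot]; simpa using hz⟩
        · obtain ⟨c, hc0⟩ := Finite.injective_iff_surjective.mp hginj 0
          refine ⟨c, ?_⟩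
          simp only at hc0
          simp [hc0, hroot]
      obtain ⟨c, hcne⟩ := hc
      have hvar : ∀ Y : TEVar h k, Y ≠ Xn → I.evalVar Y = (J c).evalVar Y := by
        intro Y hY
        cases Y with
        | leaf j hj => rfl
        | internal j hj a b =>
          by_cases hjn : j = n
          · subst hjn
            have hab : ¬(a = I.val (2 * j) ∧ b = I.val (2 * j + 1)) := by
              rintro ⟨rfl, rfl⟩
              exact hY rfl
            simp [TEInput.evalVar, hJdef, Function.update_self, if_neg hab]
          · simp [TEInput.evalVar, hJdef, Function.update_of_ne hjn]
      have hruns : ∀ t, B.run I.evalVar t = B.run (J c).evalVar t := by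
        apply B.run_congr
        intro t v hl
        have hvX : v ≠ Xn := fun hvX => hnq t (hvX ▸ hl)
        exact hvar v hvX
      obtain ⟨tI, hI⟩ := hB I
      obtain ⟨tJ, hJc⟩ := hB (J c)
      rw [← hruns tJ] at hJc
      exact hcne (B.out_unique hJc hI)
  -- Step 2: counting
  obtain ⟨t0, ht0lt, ht0r⟩ := hdepth I.evalVar
  obtain ⟨rr, hrr⟩ := Sum.isRight_iff.mp ht0r
  choose ts Xs hlab hnode hthr using key
  have hts_mem : ∀ n hn, ts n hn ∈ Finset.range t0 :=
    fun n hn => Finset.mem_range.mpr (B.inl_lt hrr (hlab n hn))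
  have hinj : ∀ n₁ n₂ hn₁ hn₂, ts n₁ hn₁ = ts n₂ hn₂ → n₁ = n₂ := by
    intro n₁ n₂ hn₁ hn₂ hts
    have hl2 := hlab n₂ hn₂
    rw [← hts] at hl2
    have := (hlab n₁ hn₁).symm.trans hl2
    rw [← hnode n₁ hn₁, ← hnode n₂ hn₂, Sum.inl.inj this]
  have hcard : (Finset.range t0).card ≤ (Finset.Ico 1 (2 ^ h)).card := by
    rw [Finset.card_range, Nat.card_Ico]
    omega
  intro t X hX
  have htmem : t ∈ Finset.range t0 := Finset.mem_range.mpr (B.inl_lt hrr hX)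
  obtain ⟨n, hn, hteq⟩ :=
    Finset.surj_on_of_inj_on_of_card_le ts hts_mem hinj hcard t htmem
  have hXX : X = Xs n hn := by
    have hl := hlab n hn
    rw [← hteq] at hl
    exact Sum.inl.inj (hX.symm.trans hl)
  rw [hXX, hnode n hn]
  exact hthr n hn
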